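/- arXiv:1505.01585 — 5 statements merged into one kernel-verified Lean document; each statement's English description precedes it below -/
import Mathlib

section
/- Let Y ~ N(θ, σ²) with σ > 0 and let λ = √τ for some τ ≥ 1. Then E[(Y² − σ²)·1{Y² ≤ σ²τ}] = (θ² )·[Φ̃(−λ − θ/σ) − Φ̃(λ − θ/σ)] + φ(λ + θ/σ)·(−σ²λ + σθ) + φ(λ − θ/σ)·(−σ²λ − σθ), where φ and Φ̃ denote the standard normal density and survival function respectively. -/
open MeasureTheory ProbabilityTheory

/-- Standard normal density. -/
noncomputable def stdPhi (z : ℝ) : ℝ := (Real.sqrt (2 * Real.pi))⁻¹ * Real.exp (-z ^ 2 / 2)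

/-- Standard normal survival function. -/
noncomputable def stdSurv (z : ℝ) : ℝ := ∫ u in Set.Ioi z, stdPhi u

lemma stdPhi_cont : Continuous stdPhi := by unfold stdPhi; fun_prop

lemma stdPhi_integrable : Integrable stdPhi := by
  have h : Integrable (fun z : ℝ => Real.exp (-(1/2 : ℝ) * z ^ 2)) :=
    integrable_exp_neg_mul_sq (by norm_num)
  have h2 := h.const_mul (Real.sqrt (2 * Real.pi))⁻¹
  refine h2.congr (Filter.Eventually.of_forall fun z => ?_)
  unfold stdPhi; ring_nf

lemma stdPhi_neg (z : ℝ) : stdPhi (-z) = stdPhi z := by unfold stdPhi; ring_nf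

lemma hasDerivAt_stdPhi (z : ℝ) : HasDerivAt stdPhi (-z * stdPhi z) z := by
  have h : HasDerivAt (fun z : ℝ => -z ^ 2 / 2) (-z) z := by
    have := ((hasDerivAt_pow 2 z).neg).div_const 2
    exact this.congr_deriv (by norm_num; ring)
  have h2 := (h.exp).const_mul (Real.sqrt (2 * Real.pi))⁻¹
  exact h2.congr_deriv (by unfold stdPhi; ring)

lemma hasDerivAt_neg_stdPhi (z : ℝ) :
    HasDerivAt (fun z => -stdPhi z) (z * stdPhi z) z := by
  exact (hasDerivAt_stdPhi z).neg.congr_deriv (by ring)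

lemma hasDerivAt_neg_mul_stdPhi (z : ℝ) :
    HasDerivAt (fun z => -(z * stdPhi z)) ((z ^ 2 - 1) * stdPhi z) z := by
  have := ((hasDerivAt_id z).mul (hasDerivAt_stdPhi z)).neg
  exact this.congr_deriv (by simp only [id_eq]; ring)

lemma integral_stdPhi_Icc {a b : ℝ} (hab : a ≤ b) :
    ∫ z in a..b, stdPhi z = stdSurv a - stdSurv b := by
  have h1 : Set.Ioc a b ∪ Set.Ioi b = Set.Ioi a := Set.Ioc_union_Ioi_eq_Ioi hab
  have hd : Disjoint (Set.Ioc a b) (Set.Ioi b) := by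
    simp [Set.disjoint_left]

  have hs := setIntegral_union hd measurableSet_Ioi
    stdPhi_integrable.integrableOn stdPhi_integrable.integrableOn
  rw [intervalIntegral.integral_of_le hab]
  unfold stdSurv
  rw [← h1, hs]
  ring

lemma key_interval (σ θ : ℝ) {a b : ℝ} (hab : a ≤ b) :
    ∫ z in a..b, ((σ * z + θ) ^ 2 - σ ^ 2) * stdPhi z
      = σ ^ 2 * (a * stdPhi a - b * stdPhi b) + 2 * σ * θ * (stdPhi a - stdPhi b)
        + θ ^ 2 * (stdSurv a - stdSurv b) := by
  have c1 : Continuous fun z : ℝ => (z ^ 2 - 1) * stdPhi z := by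
    exact (continuous_pow 2 |>.sub continuous_const).mul stdPhi_cont
  have c2 : Continuous fun z : ℝ => z * stdPhi z := continuous_id.mul stdPhi_cont
  have i1 : IntervalIntegrable (fun z => σ ^ 2 * ((z ^ 2 - 1) * stdPhi z)) volume a b :=
    (continuous_const.mul c1).intervalIntegrable a b
  have i2 : IntervalIntegrable (fun z => 2 * σ * θ * (z * stdPhi z)) volume a b :=
    (continuous_const.mul c2).intervalIntegrable a b
  have i3 : IntervalIntegrable (fun z => θ ^ 2 * stdPhi z) volume a b :=
    (continuous_const.mul stdPhi_cont).intervalIntegrable a b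
  have e : Set.EqOn (fun z => ((σ * z + θ) ^ 2 - σ ^ 2) * stdPhi z)
      (fun z => σ ^ 2 * ((z ^ 2 - 1) * stdPhi z) + 2 * σ * θ * (z * stdPhi z)
        + θ ^ 2 * stdPhi z) (Set.uIcc a b) := fun z _ => by ring
  rw [intervalIntegral.integral_congr e, intervalIntegral.integral_add (i1.add i2) i3,
    intervalIntegral.integral_add i1 i2, intervalIntegral.integral_const_mul,
    intervalIntegral.integral_const_mul, intervalIntegral.integral_const_mul]
  have I1 : ∫ z in a..b, (z ^ 2 - 1) * stdPhi z
      = -(b * stdPhi b) - -(a * stdPhi a) :=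
    intervalIntegral.integral_eq_sub_of_hasDerivAt
      (fun z _ => hasDerivAt_neg_mul_stdPhi z) (c1.intervalIntegrable a b)
  have I2 : ∫ z in a..b, z * stdPhi z = -stdPhi b - -stdPhi a :=
    intervalIntegral.integral_eq_sub_of_hasDerivAt
      (fun z _ => hasDerivAt_neg_stdPhi z) (c2.intervalIntegrable a b)
  rw [I1, I2, integral_stdPhi_Icc hab]
  ring

theorem stmt0 (σ θ τ : ℝ) (hσ : 0 < σ) (hτ : 1 ≤ τ) :
    (∫ y, (if y ^ 2 ≤ σ ^ 2 * τ then y ^ 2 - σ ^ 2 else 0)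
        ∂(gaussianReal θ (σ ^ 2).toNNReal)) =
      θ ^ 2 * (stdSurv (-Real.sqrt τ - θ / σ) - stdSurv (Real.sqrt τ - θ / σ)) +
        stdPhi (Real.sqrt τ + θ / σ) * (-σ ^ 2 * Real.sqrt τ + σ * θ) +
        stdPhi (Real.sqrt τ - θ / σ) * (-σ ^ 2 * Real.sqrt τ - σ * θ) := by
  have hτ0 : (0:ℝ) ≤ τ := zero_le_one.trans hτ
  have hσ' : σ ≠ 0 := hσ.ne'
  set lam := Real.sqrt τ with hlamdef
  have hlam0 : 0 < lam := Real.sqrt_pos.mpr (lt_of_lt_of_le one_pos hτ)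
  have hlamsq : lam ^ 2 = τ := Real.sq_sqrt hτ0
  set a := -lam - θ / σ with ha
  set b := lam - θ / σ with hb
  have hab : a ≤ b := by rw [ha, hb]; linarith
  set v : NNReal := (σ ^ 2).toNNReal with hvdef
  have hvne : v ≠ 0 := by
    simp only [hvdef, ne_eq, Real.toNNReal_eq_zero, not_le]
    positivity
  have hvv : (v : ℝ) = σ ^ 2 := Real.coe_toNNReal _ (sq_nonneg σ)
  have hdiv : σ * (θ / σ) = θ := by field_simp
  -- Step A: density
  rw [gaussianReal_of_var_ne_zero θ hvne]
  rw [show volume.withDensity (gaussianPDF θ v)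
      = volume.withDensity (fun x => ((gaussianPDFReal θ v x).toNNReal : ENNReal)) from rfl]
  rw [integral_withDensity_eq_integral_smul (measurable_gaussianPDFReal θ v).real_toNNReal]
  simp_rw [NNReal.smul_def, Real.coe_toNNReal _ (gaussianPDFReal_nonneg θ v _), smul_eq_mul]
  set H : ℝ → ℝ := fun y =>
    gaussianPDFReal θ v y * (if y ^ 2 ≤ σ ^ 2 * τ then y ^ 2 - σ ^ 2 else 0) with hH
  -- Step B: change of variables
  have hB : ∫ y, H y = σ * ∫ z, H (σ * z + θ) := by
    have h1 : (∫ z, H (σ * z + θ)) = |σ⁻¹| • ∫ x, H (x + θ) :=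
      Measure.integral_comp_mul_left (fun x => H (x + θ)) σ
    have h2 : (∫ x, H (x + θ)) = ∫ y, H y := integral_add_right_eq_self H θ
    rw [h1, h2, abs_of_pos (inv_pos.mpr hσ), smul_eq_mul]
    field_simp
  rw [hB, ← integral_const_mul]
  -- pointwise identification
  have hpdf : ∀ z : ℝ, gaussianPDFReal θ v (σ * z + θ) = σ⁻¹ * stdPhi z := by
    intro z
    simp only [gaussianPDFReal_def, hvv, stdPhi]
    have hs : Real.sqrt (2 * Real.pi * σ ^ 2) = Real.sqrt (2 * Real.pi) * σ := by
      rw [Real.sqrt_mul (by positivity), Real.sqrt_sq hσ.le]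
    have he : -(σ * z + θ - θ) ^ 2 / (2 * σ ^ 2) = -z ^ 2 / 2 := by
      field_simp; ring
    rw [hs, he, mul_inv]
    ring
  have hmem : ∀ z : ℝ, ((σ * z + θ) ^ 2 ≤ σ ^ 2 * τ ↔ z ∈ Set.Icc a b) := by
    intro z
    rw [Set.mem_Icc]
    have hsq : σ ^ 2 * τ = (σ * lam) ^ 2 := by rw [← hlamsq]; ring
    rw [hsq, ha, hb]
    constructor
    · intro h
      obtain ⟨h1, h2⟩ := abs_le_of_sq_le_sq' h (by positivity)
      constructor <;> nlinarith [hdiv, mul_pos hσ hlam0]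
    · rintro ⟨h1, h2⟩
      apply sq_le_sq'
      · nlinarith [mul_le_mul_of_nonneg_left h1 hσ.le, hdiv]
      · nlinarith [mul_le_mul_of_nonneg_left h2 hσ.le, hdiv]
  have hpt : ∀ z : ℝ, σ * H (σ * z + θ)
      = Set.indicator (Set.Icc a b) (fun z => ((σ * z + θ) ^ 2 - σ ^ 2) * stdPhi z) z := by
    intro z
    rw [hH]
    simp only [hpdf z]
    by_cases hc : (σ * z + θ) ^ 2 ≤ σ ^ 2 * τ
    · rw [if_pos hc, Set.indicator_of_mem ((hmem z).mp hc)]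
      field_simp
    · rw [if_neg hc, Set.indicator_of_notMem (fun hm => hc ((hmem z).mpr hm))]
      ring
  rw [integral_congr_ae (Filter.Eventually.of_forall hpt),
    integral_indicator measurableSet_Icc, integral_Icc_eq_integral_Ioc,
    ← intervalIntegral.integral_of_le hab, key_interval σ θ hab]
  have hφa : stdPhi a = stdPhi (lam + θ / σ) := by
    rw [ha, show -lam - θ / σ = -(lam + θ / σ) by ring, stdPhi_neg]
  rw [hφa, ha, hb]
  field_simp
  ring
end

section
/- Let Y ~ N(0, σ²) with σ > 0 and τ ≥ 1. Then E[(Y² − σ²)·1{Y² ≤ σ²τ}] = −2σ²√τ·φ(√τ), where φ is the standard normal density. -/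
open MeasureTheory ProbabilityTheory
open scoped NNReal ENNReal

theorem stmt1 (σ τ : ℝ) (hσ : 0 < σ) (hτ : 1 ≤ τ) :
    (∫ y, (if y ^ 2 ≤ σ ^ 2 * τ then y ^ 2 - σ ^ 2 else 0)
        ∂(gaussianReal 0 (σ ^ 2).toNNReal)) =
      -2 * σ ^ 2 * Real.sqrt τ * stdPhi (Real.sqrt τ) := by
  have hτ0 : (0:ℝ) ≤ τ := le_trans zero_le_one hτ
  set v : ℝ≥0 := (σ ^ 2).toNNReal with hv_def
  have hv : v ≠ 0 := by
    simp [hv_def, Real.toNNReal_eq_zero, not_le, pow_pos hσ, hσ.ne']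
  have hvR : (v : ℝ) = σ ^ 2 := Real.coe_toNNReal _ (sq_nonneg σ)
  set a : ℝ := σ * Real.sqrt τ with ha_def
  have ha0 : 0 < a := mul_pos hσ (Real.sqrt_pos.2 (lt_of_lt_of_le one_pos hτ))
  -- the pdf as a real function
  set p : ℝ → ℝ := gaussianPDFReal 0 v with hp_def
  have hpnn : ∀ x, 0 ≤ p x := fun x => gaussianPDFReal_nonneg 0 v x
  -- rewrite the integral against Lebesgue with density
  rw [gaussianReal_of_var_ne_zero _ hv]
  have hmeas : Measurable fun x => (p x).toNNReal :=
    (measurable_gaussianPDFReal 0 v).real_toNNReal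
  have hpdf : (gaussianPDF 0 v) = fun x => ((Real.toNNReal (p x) : NNReal) : ENNReal) := by
    funext x; rfl
  rw [hpdf, integral_withDensity_eq_integral_smul hmeas]
  have hcond : ∀ y : ℝ, (y ^ 2 ≤ σ ^ 2 * τ) ↔ y ∈ Set.Icc (-a) a := by
    intro y
    have : σ ^ 2 * τ = a ^ 2 := by
      rw [ha_def, mul_pow, Real.sq_sqrt hτ0]
    rw [this, Set.mem_Icc]
    constructor
    · intro h; constructor <;> nlinarith
    · rintro ⟨h1, h2⟩; nlinarith
  have hintg : ∀ y : ℝ,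
      (p y).toNNReal • (if y ^ 2 ≤ σ ^ 2 * τ then y ^ 2 - σ ^ 2 else 0)
        = Set.indicator (Set.Icc (-a) a) (fun y => (y ^ 2 - σ ^ 2) * p y) y := by
    intro y
    rw [Set.indicator_apply]
    by_cases h : y ∈ Set.Icc (-a) a
    · rw [if_pos h, if_pos ((hcond y).2 h), NNReal.smul_def,
        Real.coe_toNNReal _ (hpnn y), smul_eq_mul, mul_comm]
    · rw [if_neg h, if_neg (fun hh => h ((hcond y).1 hh)), smul_zero]
  simp only [hintg]
  rw [integral_indicator measurableSet_Icc, MeasureTheory.integral_Icc_eq_integral_Ioc,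
    ← intervalIntegral.integral_of_le (by linarith : -a ≤ a)]
  -- FTC
  have hps : ∀ y : ℝ, p y = (Real.sqrt (2 * Real.pi * σ ^ 2))⁻¹ * Real.exp (-(y ^ 2) / (2 * σ ^ 2)) := by
    intro y
    simp [hp_def, gaussianPDFReal, hvR, sub_zero]
  have hderiv : ∀ y : ℝ, HasDerivAt (fun y => -σ ^ 2 * (y * p y)) ((y ^ 2 - σ ^ 2) * p y) y := by
    intro y
    have hσ2 : (0:ℝ) < σ ^ 2 := pow_pos hσ 2
    have h1 : HasDerivAt (fun y : ℝ => -(y ^ 2) / (2 * σ ^ 2)) (-y / σ ^ 2) y := by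
      have := ((hasDerivAt_pow 2 y).neg).div_const (2 * σ ^ 2)
      refine this.congr_deriv ?_
      field_simp
      ring
    have h2 : HasDerivAt (fun y : ℝ => Real.exp (-(y ^ 2) / (2 * σ ^ 2)))
        (Real.exp (-(y ^ 2) / (2 * σ ^ 2)) * (-y / σ ^ 2)) y := (Real.hasDerivAt_exp _).comp y h1
    have h3 : HasDerivAt (fun y : ℝ => y * Real.exp (-(y ^ 2) / (2 * σ ^ 2)))
        (Real.exp (-(y ^ 2) / (2 * σ ^ 2)) * (1 - y ^ 2 / σ ^ 2)) y := by
      have := (hasDerivAt_id y).mul h2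
      refine this.congr_deriv ?_
      simp only [id]
      field_simp
      ring
    have h4 := (h3.const_mul ((Real.sqrt (2 * Real.pi * σ ^ 2))⁻¹)).const_mul (-σ ^ 2)
    have heq : (fun y => -σ ^ 2 * (y * p y)) =
        fun y => -σ ^ 2 * ((Real.sqrt (2 * Real.pi * σ ^ 2))⁻¹ * (y * Real.exp (-(y ^ 2) / (2 * σ ^ 2)))) := by
      funext y; rw [hps y]; ring
    rw [heq]
    refine h4.congr_deriv ?_
    rw [hps y]
    field_simp
    ring
  have hcont : ContinuousOn (fun y => (y ^ 2 - σ ^ 2) * p y) (Set.uIcc (-a) a) := by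
    have hc : Continuous p := by
      have : p = fun y => (Real.sqrt (2 * Real.pi * σ ^ 2))⁻¹ *
          Real.exp (-(y ^ 2) / (2 * σ ^ 2)) := funext hps
      rw [this]
      exact continuous_const.mul (Real.continuous_exp.comp
        (((continuous_pow 2).neg).div_const _))
    exact (((continuous_pow 2).sub continuous_const).mul hc).continuousOn
  rw [intervalIntegral.integral_eq_sub_of_hasDerivAt (fun y _ => hderiv y)
    (hcont.intervalIntegrable)]
  -- compute
  have hpa : p a = (Real.sqrt (2 * Real.pi))⁻¹ * Real.exp (-τ / 2) / σ := by
    rw [hps a]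
    have h1 : Real.sqrt (2 * Real.pi * σ ^ 2) = Real.sqrt (2 * Real.pi) * σ := by
      rw [Real.sqrt_mul (by positivity), Real.sqrt_sq hσ.le]
    have h2 : -(a ^ 2) / (2 * σ ^ 2) = -τ / 2 := by
      rw [ha_def, mul_pow, Real.sq_sqrt hτ0]
      field_simp
    rw [h1, h2]
    field_simp
  have hpna : p (-a) = p a := by
    rw [hps a, hps (-a)]; ring_nf
  rw [hpna]
  rw [stdPhi, Real.sq_sqrt hτ0, hpa, ha_def]
  have h2π : Real.sqrt (2 * Real.pi) ≠ 0 := by positivity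
  field_simp
  ring
end

section
/- Let M be a hypergeometric random variable with P(M = m) = C(q,m)·C(k−q, q−m)/C(k,q) for 0 ≤ m ≤ q (drawing q items from k with q marked), and let t > 0. Then E[e^{tM}] ≤ (1 − q/k + (q/k)e^t)^q. -/
open MeasureTheory ProbabilityTheory

open Finset in
private lemma stmt11_sum_hyp (k q j : ℕ) (hjq : j ≤ q) (hqk : q ≤ k) :
    ∑ m ∈ range (q + 1), q.choose m * (k - q).choose (q - m) * m.choose j
      = q.choose j * (k - j).choose (q - j) := by
  have hsub : Ico j (q + 1) ⊆ range (q + 1) := by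
    intro m hm; simp only [mem_Ico] at hm; simp [hm.2]
  rw [← Finset.sum_subset hsub (by
    intro m hm hni
    simp only [mem_range] at hm
    simp only [mem_Ico, not_and, not_lt] at hni
    have hmj : m < j := by
      by_contra h
      push_neg at h
      omega
    simp [Nat.choose_eq_zero_of_lt hmj])]
  rw [Finset.sum_Ico_eq_sum_range]
  have hstep : ∀ i ∈ range (q + 1 - j),
      q.choose (j + i) * (k - q).choose (q - (j + i)) * (j + i).choose j
        = q.choose j * ((q - j).choose i * (k - q).choose ((q - j) - i)) := by
    intro i hi
    simp only [mem_range] at hi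
    have h1 : q.choose (j + i) * (j + i).choose j
        = q.choose j * (q - j).choose i := by
      have := Nat.choose_mul (n := q) (k := j + i) (s := j) (by omega)
      simpa [Nat.add_sub_cancel_left] using this
    have h2 : q - (j + i) = (q - j) - i := by omega
    calc q.choose (j + i) * (k - q).choose (q - (j + i)) * (j + i).choose j
        = q.choose (j + i) * (j + i).choose j * (k - q).choose ((q - j) - i) := by
          rw [h2]; ring
      _ = q.choose j * ((q - j).choose i * (k - q).choose ((q - j) - i)) := by
          rw [h1]; ring
  rw [Finset.sum_congr rfl hstep, ← Finset.mul_sum]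
  congr 1
  have hV := Nat.add_choose_eq (q - j) (k - q) (q - j)
  rw [Finset.Nat.sum_antidiagonal_eq_sum_range_succ_mk] at hV
  have hkj : (q - j) + (k - q) = k - j := by omega
  have hr : q + 1 - j = (q - j) + 1 := by omega
  rw [hr, ← hkj, hV]

private lemma stmt11_desc (k q : ℕ) (hqk : q ≤ k) :
    ∀ j, q.descFactorial j * k ^ j ≤ k.descFactorial j * q ^ j := by
  intro j
  induction j with
  | zero => simp
  | succ j ih =>
    have key : (q - j) * k ≤ (k - j) * q := by
      calc (q - j) * k = q * k - j * k := Nat.sub_mul q j k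
        _ ≤ q * k - j * q := Nat.sub_le_sub_left (Nat.mul_le_mul_left j hqk) _
        _ = (k - j) * q := by rw [mul_comm q k, ← Nat.sub_mul]
    calc q.descFactorial (j + 1) * k ^ (j + 1)
        = ((q - j) * k) * (q.descFactorial j * k ^ j) := by
          rw [Nat.descFactorial_succ, pow_succ]; ring
      _ ≤ ((k - j) * q) * (k.descFactorial j * q ^ j) := Nat.mul_le_mul key ih
      _ = k.descFactorial (j + 1) * q ^ (j + 1) := by
          rw [Nat.descFactorial_succ, pow_succ]; ring

private lemma stmt11_choose_le (k q j : ℕ) (hqk : q ≤ k) :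
    q.choose j * k ^ j ≤ k.choose j * q ^ j := by
  have h := stmt11_desc k q hqk j
  rw [Nat.descFactorial_eq_factorial_mul_choose, Nat.descFactorial_eq_factorial_mul_choose,
    mul_assoc, mul_assoc] at h
  exact Nat.le_of_mul_le_mul_left h (Nat.factorial_pos j)

theorem stmt11 (k q : ℕ) (hq : 1 ≤ q) (hqk : q ≤ k) (t : ℝ) (ht : 0 < t) :
    (∑ m ∈ Finset.range (q + 1),
        ((q.choose m * (k - q).choose (q - m) : ℝ) / (k.choose q : ℝ)) *
          Real.exp (t * m)) ≤
      (1 - (q : ℝ) / k + (q : ℝ) / k * Real.exp t) ^ q := by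
  have hk : 1 ≤ k := le_trans hq hqk
  have hk0 : (0 : ℝ) < k := by exact_mod_cast hk
  set x : ℝ := Real.exp t with hxdef
  have hx1 : 1 ≤ x := Real.one_le_exp ht.le
  have hy : (0 : ℝ) ≤ x - 1 := by linarith
  have hkq : (0 : ℝ) < (k.choose q : ℝ) := by
    exact_mod_cast Nat.choose_pos hqk
  -- rewrite exp (t * m) = x ^ m
  have hexp : ∀ m : ℕ, Real.exp (t * m) = x ^ m := by
    intro m
    rw [mul_comm, Real.exp_nat_mul]
  -- expand x ^ m in powers of (x - 1)
  have hpow : ∀ m : ℕ, m ≤ q → x ^ m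
      = ∑ j ∈ Finset.range (q + 1), (m.choose j : ℝ) * (x - 1) ^ j := by
    intro m hm
    have h1 : x = (x - 1) + 1 := by ring
    rw [h1, add_pow]
    simp only [one_pow, mul_one]
    rw [← Finset.sum_subset (Finset.range_subset_range.mpr (by omega) :
        Finset.range (m + 1) ⊆ Finset.range (q + 1))]
    · exact Finset.sum_congr rfl fun j _ => by ring
    · intro j hj hnj
      simp only [Finset.mem_range, not_lt] at hnj
      rw [Nat.choose_eq_zero_of_lt (by omega)]
      simp
  -- swap sums
  have hswap : (∑ m ∈ Finset.range (q + 1),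
        ((q.choose m * (k - q).choose (q - m) : ℝ) / (k.choose q : ℝ)) *
          Real.exp (t * m))
      = ∑ j ∈ Finset.range (q + 1),
          ((q.choose j * (k - j).choose (q - j) : ℝ) / (k.choose q : ℝ)) * (x - 1) ^ j := by
    calc (∑ m ∈ Finset.range (q + 1),
        ((q.choose m * (k - q).choose (q - m) : ℝ) / (k.choose q : ℝ)) *
          Real.exp (t * m))
        = ∑ m ∈ Finset.range (q + 1), ∑ j ∈ Finset.range (q + 1),
            ((q.choose m * (k - q).choose (q - m) : ℝ) / (k.choose q : ℝ)) *
              ((m.choose j : ℝ) * (x - 1) ^ j) := by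
          refine Finset.sum_congr rfl fun m hm => ?_
          simp only [Finset.mem_range] at hm
          rw [hexp m, hpow m (by omega), Finset.mul_sum]
      _ = ∑ j ∈ Finset.range (q + 1), ∑ m ∈ Finset.range (q + 1),
            ((q.choose m * (k - q).choose (q - m) : ℝ) / (k.choose q : ℝ)) *
              ((m.choose j : ℝ) * (x - 1) ^ j) := Finset.sum_comm
      _ = ∑ j ∈ Finset.range (q + 1),
          ((q.choose j * (k - j).choose (q - j) : ℝ) / (k.choose q : ℝ)) * (x - 1) ^ j := by
          refine Finset.sum_congr rfl fun j hj => ?_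
          simp only [Finset.mem_range] at hj
          have hid := stmt11_sum_hyp k q j (by omega) hqk
          have : (∑ m ∈ Finset.range (q + 1),
              (q.choose m * (k - q).choose (q - m) * m.choose j : ℝ))
              = (q.choose j * (k - j).choose (q - j) : ℝ) := by
            exact_mod_cast congrArg (Nat.cast : ℕ → ℝ) hid
          rw [← this, Finset.sum_div, Finset.sum_mul]
          refine Finset.sum_congr rfl fun m hm => ?_
          push_cast
          ring
  rw [hswap]
  -- RHS expansion
  have hRHS : (1 - (q : ℝ) / k + (q : ℝ) / k * x) ^ q
      = ∑ j ∈ Finset.range (q + 1),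
          (q.choose j : ℝ) * ((q : ℝ) / k) ^ j * (x - 1) ^ j := by
    have h1 : 1 - (q : ℝ) / k + (q : ℝ) / k * x = ((q : ℝ) / k * (x - 1)) + 1 := by ring
    rw [h1, add_pow]
    refine Finset.sum_congr rfl fun j _ => ?_
    rw [mul_pow]
    ring
  rw [hRHS]
  -- termwise comparison
  refine Finset.sum_le_sum fun j hj => ?_
  simp only [Finset.mem_range] at hj
  have hjq : j ≤ q := by omega
  refine mul_le_mul_of_nonneg_right ?_ (pow_nonneg hy j)
  -- key: C(q,j)*C(k-j,q-j)/C(k,q) ≤ C(q,j)*(q/k)^j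
  have hkj : (0 : ℝ) < (k.choose j : ℝ) := by
    exact_mod_cast Nat.choose_pos (le_trans hjq hqk)
  have hid : (k.choose q : ℝ) * q.choose j = k.choose j * (k - j).choose (q - j) := by
    exact_mod_cast congrArg (Nat.cast : ℕ → ℝ) (Nat.choose_mul (n := k) (k := q) hjq)
  -- so C(q,j)*C(k-j,q-j)/C(k,q) = C(q,j)^2 / C(k,j)
  have heq : (q.choose j * (k - j).choose (q - j) : ℝ) / (k.choose q : ℝ)
      = (q.choose j : ℝ) * (q.choose j : ℝ) / (k.choose j : ℝ) := by
    rw [div_eq_div_iff hkq.ne' hkj.ne']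
    nlinarith [hid]
  rw [heq]
  have hle : (q.choose j : ℝ) * k ^ j ≤ (k.choose j : ℝ) * q ^ j := by
    exact_mod_cast stmt11_choose_le k q j hqk
  have hkpow : (0 : ℝ) < (k : ℝ) ^ j := pow_pos hk0 j
  rw [div_pow, ← mul_div_assoc, div_le_div_iff₀ hkj hkpow]
  calc (q.choose j : ℝ) * (q.choose j : ℝ) * (k : ℝ) ^ j
      = (q.choose j : ℝ) * ((q.choose j : ℝ) * (k : ℝ) ^ j) := by ring
    _ ≤ (q.choose j : ℝ) * ((k.choose j : ℝ) * (q : ℝ) ^ j) :=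
        mul_le_mul_of_nonneg_left hle (by positivity)
    _ = (q.choose j : ℝ) * (q : ℝ) ^ j * (k.choose j : ℝ) := by ring
end

section
/- (Constrained Risk Inequality) Let P_f and P_g be two probability distributions on a measurable space with densities f, g relative to a dominating measure, with chi-square affinity ξ = ∫g²/f < ∞, and let θ_f, θ_g be two real parameter values associated with f, g. Then for any estimator δ(X), max{E_f(δ(X) − θ_f)², E_g(δ(X) − θ_g)²} ≥ (θ_g − θ_f)²/(1 + ξ^{1/2})². -/
open MeasureTheory ProbabilityTheory

lemma cs_integral {α : Type*} [MeasurableSpace α] (μ : Measure α)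
    (a b : α → ℝ)
    (ha2 : Integrable (fun x => a x ^ 2) μ) (hb2 : Integrable (fun x => b x ^ 2) μ)
    (hab : Integrable (fun x => a x * b x) μ) :
    (∫ x, a x * b x ∂μ) ^ 2 ≤ (∫ x, a x ^ 2 ∂μ) * (∫ x, b x ^ 2 ∂μ) := by
  have key : ∀ t : ℝ, 0 ≤ (∫ x, b x ^ 2 ∂μ) * (t * t) + (2 * ∫ x, a x * b x ∂μ) * t
      + ∫ x, a x ^ 2 ∂μ := by
    intro t
    have h0 : 0 ≤ ∫ x, (a x ^ 2 + (2 * t) * (a x * b x) + t ^ 2 * b x ^ 2) ∂μ := by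
      apply integral_nonneg
      intro x
      show (0:ℝ) ≤ a x ^ 2 + (2 * t) * (a x * b x) + t ^ 2 * b x ^ 2
      nlinarith [sq_nonneg (a x + t * b x)]
    have e1 : ∫ x, (a x ^ 2 + (2 * t) * (a x * b x) + t ^ 2 * b x ^ 2) ∂μ
        = (∫ x, a x ^ 2 ∂μ) + (2 * t) * (∫ x, a x * b x ∂μ)
          + t ^ 2 * (∫ x, b x ^ 2 ∂μ) := by
      have i1 : Integrable (fun x => a x ^ 2 + (2 * t) * (a x * b x)) μ :=
        ha2.add (hab.const_mul (2 * t))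
      have i2 : Integrable (fun x => t ^ 2 * b x ^ 2) μ := hb2.const_mul (t ^ 2)
      rw [integral_add i1 i2, integral_add ha2 (hab.const_mul (2 * t)),
        integral_const_mul, integral_const_mul]
    rw [e1] at h0
    nlinarith [h0]
  have hd := discrim_le_zero key
  rw [discrim] at hd
  nlinarith [hd]

/-- The Constrained Risk Inequality of Brown and Low (1996). -/
theorem stmt15 {α : Type*} [MeasurableSpace α] (μ : Measure α) [SigmaFinite μ]
    (f g : α → ℝ) (hf : Measurable f) (hg : Measurable g)
    (hf0 : ∀ᵐ x ∂μ, 0 < f x) (hg0 : ∀ x, 0 ≤ g x)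
    (hfi : Integrable f μ) (hgi : Integrable g μ)
    (hf1 : ∫ x, f x ∂μ = 1) (hg1 : ∫ x, g x ∂μ = 1)
    (hchi : Integrable (fun x => (g x) ^ 2 / f x) μ)
    (δ : α → ℝ) (hδ : Measurable δ) (θf θg : ℝ)
    (hrf : Integrable (fun x => (δ x - θf) ^ 2 * f x) μ)
    (hrg : Integrable (fun x => (δ x - θg) ^ 2 * g x) μ) :
    (θg - θf) ^ 2 / (1 + Real.sqrt (∫ x, (g x) ^ 2 / f x ∂μ)) ^ 2 ≤
      max (∫ x, (δ x - θf) ^ 2 * f x ∂μ) (∫ x, (δ x - θg) ^ 2 * g x ∂μ) := by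
  set ξ := ∫ x, (g x) ^ 2 / f x ∂μ with hξdef
  set Rf := ∫ x, (δ x - θf) ^ 2 * f x ∂μ with hRfdef
  set Rg := ∫ x, (δ x - θg) ^ 2 * g x ∂μ with hRgdef
  -- measurability facts
  have hsf : Measurable fun x => Real.sqrt (f x) := Real.continuous_sqrt.measurable.comp hf
  have hsg : Measurable fun x => Real.sqrt (g x) := Real.continuous_sqrt.measurable.comp hg
  -- Application 1 : a = (δ-θg)√g, b = √g
  set a1 : α → ℝ := fun x => (δ x - θg) * Real.sqrt (g x) with ha1def
  set b1 : α → ℝ := fun x => Real.sqrt (g x) with hb1def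
  have ha1sq : (fun x => a1 x ^ 2) = fun x => (δ x - θg) ^ 2 * g x := by
    funext x
    simp only [ha1def, mul_pow, Real.sq_sqrt (hg0 x)]
  have hb1sq : (fun x => b1 x ^ 2) = g := by
    funext x; simp [hb1def, Real.sq_sqrt (hg0 x)]
  have hab1 : (fun x => a1 x * b1 x) = fun x => (δ x - θg) * g x := by
    funext x
    simp only [ha1def, hb1def, mul_assoc, Real.mul_self_sqrt (hg0 x)]
  have hab1i : Integrable (fun x => a1 x * b1 x) μ := by
    rw [hab1]
    apply Integrable.mono' (((hrg.add hgi).div_const 2))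
    · exact ((hδ.sub measurable_const).mul hg).aestronglyMeasurable
    · filter_upwards with x
      have hgx := hg0 x
      rw [Real.norm_eq_abs, abs_mul, abs_of_nonneg hgx]
      simp only [Pi.add_apply]
      nlinarith [sq_nonneg (|δ x - θg| - 1), abs_nonneg (δ x - θg), sq_abs (δ x - θg)]
  have hcs1 : (∫ x, (δ x - θg) * g x ∂μ) ^ 2 ≤ Rg * 1 := by
    have := cs_integral μ a1 b1 (by rw [ha1sq]; exact hrg) (by rw [hb1sq]; exact hgi) hab1i
    rw [ha1sq, hb1sq, hab1] at this
    rwa [hg1] at this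
  -- Application 2 : a = (δ-θf)√f, b = g/√f
  set a2 : α → ℝ := fun x => (δ x - θf) * Real.sqrt (f x) with ha2def
  set b2 : α → ℝ := fun x => g x / Real.sqrt (f x) with hb2def
  have ha2sq : (fun x => a2 x ^ 2) =ᵐ[μ] fun x => (δ x - θf) ^ 2 * f x := by
    filter_upwards [hf0] with x hx
    simp only [ha2def, mul_pow, Real.sq_sqrt hx.le]
  have hb2sq : (fun x => b2 x ^ 2) =ᵐ[μ] fun x => (g x) ^ 2 / f x := by
    filter_upwards [hf0] with x hx
    simp only [hb2def, div_pow, Real.sq_sqrt hx.le]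
  have hab2 : (fun x => a2 x * b2 x) =ᵐ[μ] fun x => (δ x - θf) * g x := by
    filter_upwards [hf0] with x hx
    have hs : Real.sqrt (f x) ≠ 0 := by positivity
    simp only [ha2def, hb2def]
    field_simp
  have ha2i : Integrable (fun x => a2 x ^ 2) μ := hrf.congr ha2sq.symm
  have hb2i : Integrable (fun x => b2 x ^ 2) μ := hchi.congr hb2sq.symm
  have hab2i : Integrable (fun x => a2 x * b2 x) μ := by
    apply Integrable.mono' ((ha2i.add hb2i).div_const 2)
    · exact (((hδ.sub measurable_const).mul hsf).mul (hg.div hsf)).aestronglyMeasurable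
    · filter_upwards with x
      rw [Real.norm_eq_abs, abs_mul]
      simp only [Pi.add_apply]
      nlinarith [sq_nonneg (|a2 x| - |b2 x|), abs_nonneg (a2 x), abs_nonneg (b2 x),
        sq_abs (a2 x), sq_abs (b2 x)]
  have hcs2 : (∫ x, (δ x - θf) * g x ∂μ) ^ 2 ≤ Rf * ξ := by
    have := cs_integral μ a2 b2 ha2i hb2i hab2i
    rwa [integral_congr_ae ha2sq, integral_congr_ae hb2sq, integral_congr_ae hab2] at this
  -- difference of integrals
  have hab2i' : Integrable (fun x => (δ x - θf) * g x) μ := hab2i.congr hab2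
  have hab1i' : Integrable (fun x => (δ x - θg) * g x) μ := by rwa [hab1] at hab1i
  set A := ∫ x, (δ x - θf) * g x ∂μ with hAdef
  set B := ∫ x, (δ x - θg) * g x ∂μ with hBdef
  have hdiff : A - B = θg - θf := by
    rw [hAdef, hBdef, ← integral_sub hab2i' hab1i']
    have : (fun x => (δ x - θf) * g x - (δ x - θg) * g x) = fun x => (θg - θf) * g x := by
      funext x; ring
    rw [this, integral_const_mul, hg1, mul_one]
  -- nonnegativity
  have hRg0 : 0 ≤ Rg := integral_nonneg fun x => mul_nonneg (sq_nonneg _) (hg0 x)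
  have hRf0 : 0 ≤ Rf := integral_nonneg_of_ae <| by
    filter_upwards [hf0] with x hx; exact mul_nonneg (sq_nonneg _) hx.le
  have hξ0 : 0 ≤ ξ := integral_nonneg_of_ae <| by
    filter_upwards [hf0] with x hx; positivity
  set M := max Rf Rg with hMdef
  have hM0 : 0 ≤ M := le_trans hRg0 (le_max_right _ _)
  -- bounds on |A| and |B|
  have hA : |A| ≤ Real.sqrt M * Real.sqrt ξ := by
    have h1 : |A| = Real.sqrt (A ^ 2) := (Real.sqrt_sq_eq_abs A).symm
    rw [h1]
    calc Real.sqrt (A ^ 2) ≤ Real.sqrt (Rf * ξ) := Real.sqrt_le_sqrt hcs2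
      _ = Real.sqrt Rf * Real.sqrt ξ := Real.sqrt_mul hRf0 _
      _ ≤ Real.sqrt M * Real.sqrt ξ := by
          gcongr
          exact le_max_left _ _
  have hB : |B| ≤ Real.sqrt M := by
    have h1 : |B| = Real.sqrt (B ^ 2) := (Real.sqrt_sq_eq_abs B).symm
    rw [h1]
    calc Real.sqrt (B ^ 2) ≤ Real.sqrt (Rg * 1) := Real.sqrt_le_sqrt hcs1
      _ = Real.sqrt Rg := by rw [mul_one]
      _ ≤ Real.sqrt M := Real.sqrt_le_sqrt (le_max_right _ _)
  -- combine
  have habs : |θg - θf| ≤ Real.sqrt M * (1 + Real.sqrt ξ) := by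
    calc |θg - θf| = |A - B| := by rw [hdiff]
      _ ≤ |A| + |B| := abs_sub _ _
      _ ≤ Real.sqrt M * Real.sqrt ξ + Real.sqrt M := add_le_add hA hB
      _ = Real.sqrt M * (1 + Real.sqrt ξ) := by ring
  have hsq : (θg - θf) ^ 2 ≤ M * (1 + Real.sqrt ξ) ^ 2 := by
    calc (θg - θf) ^ 2 = |θg - θf| ^ 2 := (sq_abs _).symm
      _ ≤ (Real.sqrt M * (1 + Real.sqrt ξ)) ^ 2 := by
          apply pow_le_pow_left₀ (abs_nonneg _) habs
      _ = (Real.sqrt M) ^ 2 * (1 + Real.sqrt ξ) ^ 2 := by ring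
      _ = M * (1 + Real.sqrt ξ) ^ 2 := by rw [Real.sq_sqrt hM0]
  have hpos : (0:ℝ) < (1 + Real.sqrt ξ) ^ 2 := by positivity
  rw [div_le_iff₀ hpos]
  linarith [hsq]
end

section
/- Let Y ~ N(θ, σ²) with σ > 0 and τ ≥ 1, and set θ₀ = E[((Z² − σ²τ)₊)] for Z ~ N(0, σ²). Then the function B(θ) = E[(Y² − σ²τ)₊] − θ₀ is nonnegative for all θ ∈ ℝ, is even in θ, and satisfies (E[(Y² − σ²τ)₊ − θ₀])² ≤ max{6σ²θ² + σ⁴(4√τ + 18)e^{−τ/2}, 10θ⁴}. -/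
open MeasureTheory ProbabilityTheory

/-- The bias function `B(θ) = E_θ[(Y² − σ²τ)₊] − E_0[(Y² − σ²τ)₊]`. -/
noncomputable def Bfun (σ τ θ : ℝ) : ℝ :=
  (∫ y, max (y ^ 2 - σ ^ 2 * τ) 0 ∂(gaussianReal θ (σ ^ 2).toNNReal)) -
    ∫ y, max (y ^ 2 - σ ^ 2 * τ) 0 ∂(gaussianReal 0 (σ ^ 2).toNNReal)

namespace Stmt19H

open Real
open scoped NNReal ENNReal

/-- Elementary Cauchy–Schwarz for integrals. -/
lemma cs_int {μ : Measure ℝ} {f g : ℝ → ℝ} (hf2 : Integrable (fun y => f y ^ 2) μ)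
    (hg2 : Integrable (fun y => g y ^ 2) μ) (hfg : Integrable (fun y => f y * g y) μ) :
    (∫ y, f y * g y ∂μ) ^ 2 ≤ (∫ y, f y ^ 2 ∂μ) * (∫ y, g y ^ 2 ∂μ) := by
  have key : ∀ t : ℝ, 0 ≤ (∫ y, g y ^ 2 ∂μ) * (t * t) + (2 * ∫ y, f y * g y ∂μ) * t
      + ∫ y, f y ^ 2 ∂μ := by
    intro t
    have h1 : 0 ≤ ∫ y, (f y + t * g y) ^ 2 ∂μ := integral_nonneg fun y => sq_nonneg _
    have h2 : ∫ y, (f y + t * g y) ^ 2 ∂μ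
        = (∫ y, g y ^ 2 ∂μ) * (t * t) + (2 * ∫ y, f y * g y ∂μ) * t + ∫ y, f y ^ 2 ∂μ := by
      have hrw : (fun y => (f y + t * g y) ^ 2)
          = fun y => (f y ^ 2 + (2 * t) * (f y * g y)) + (t * t) * g y ^ 2 := by
        funext y; ring
      rw [hrw]
      have e1 : ∫ y, (f y ^ 2 + (2 * t) * (f y * g y)) + (t * t) * g y ^ 2 ∂μ
          = (∫ y, f y ^ 2 + (2 * t) * (f y * g y) ∂μ) + ∫ y, (t * t) * g y ^ 2 ∂μ :=
        integral_add (hf2.add (hfg.const_mul _)) (hg2.const_mul _)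
      have e2 : ∫ y, f y ^ 2 + (2 * t) * (f y * g y) ∂μ
          = (∫ y, f y ^ 2 ∂μ) + ∫ y, (2 * t) * (f y * g y) ∂μ :=
        integral_add hf2 (hfg.const_mul _)
      rw [e1, e2, integral_const_mul, integral_const_mul]
      ring
    linarith [h2 ▸ h1]
  have hd := discrim_le_zero key
  rw [discrim] at hd
  nlinarith [hd]

variable {σ : ℝ}

/-- Explicit Gaussian density. -/
noncomputable def P (σ m y : ℝ) : ℝ :=
  (Real.sqrt (2 * π * σ ^ 2))⁻¹ * Real.exp (-(y - m) ^ 2 / (2 * σ ^ 2))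

/-- The truncated square function. -/
noncomputable def G (σ τ y : ℝ) : ℝ := max (y ^ 2 - σ ^ 2 * τ) 0

/-- The likelihood ratio. -/
noncomputable def Lf (σ θ y : ℝ) : ℝ := Real.exp ((2 * θ * y - θ ^ 2) / (2 * σ ^ 2))

lemma coe_var (hσ : 0 < σ) : (((σ ^ 2).toNNReal : ℝ≥0) : ℝ) = σ ^ 2 :=
  Real.coe_toNNReal _ (sq_nonneg σ)

lemma var_ne_zero (hσ : 0 < σ) : (σ ^ 2).toNNReal ≠ 0 := by
  rw [ne_eq, Real.toNNReal_eq_zero]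
  push_neg
  positivity

lemma P_eq (hσ : 0 < σ) (m : ℝ) : gaussianPDFReal m (σ ^ 2).toNNReal = P σ m := by
  funext y
  rw [gaussianPDFReal, P, coe_var hσ]

lemma P_nonneg (σ m y : ℝ) : 0 ≤ P σ m y := by
  rw [P]; positivity

lemma P_cont (σ m : ℝ) : Continuous (P σ m) := by
  unfold P; fun_prop

lemma integrable_P (hσ : 0 < σ) (m : ℝ) : Integrable (P σ m) := by
  rw [← P_eq hσ]; exact integrable_gaussianPDFReal m _

lemma integral_P (hσ : 0 < σ) (m : ℝ) : ∫ y, P σ m y = 1 := by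
  rw [← P_eq hσ]; exact integral_gaussianPDFReal_eq_one m (var_ne_zero hσ)

/-- Integrals against the Gaussian measure as Lebesgue integrals against the density. -/
lemma repr (hσ : 0 < σ) (m : ℝ) (f : ℝ → ℝ) :
    ∫ y, f y ∂(gaussianReal m (σ ^ 2).toNNReal) = ∫ y, P σ m y * f y := by
  rw [gaussianReal_of_var_ne_zero m (var_ne_zero hσ)]
  have h1 : (gaussianPDF m (σ ^ 2).toNNReal)
      = fun y => (((gaussianPDFReal m (σ ^ 2).toNNReal y).toNNReal : ℝ≥0) : ℝ≥0∞) := rfl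
  rw [h1, integral_withDensity_eq_integral_smul
    ((measurable_gaussianPDFReal m _).real_toNNReal) f]
  congr 1
  funext y
  rw [NNReal.smul_def, Real.coe_toNNReal _ (gaussianPDFReal_nonneg m _ y), smul_eq_mul,
    P_eq hσ]

lemma integrable_pow_exp (hσ : 0 < σ) (j : ℕ) :
    Integrable (fun x : ℝ => x ^ j * Real.exp (-(2 * σ ^ 2)⁻¹ * x ^ 2)) := by
  have hb : (0:ℝ) < (2 * σ ^ 2)⁻¹ := by positivity
  have hs : (-1:ℝ) < (j : ℝ) := lt_of_lt_of_le neg_one_lt_zero (Nat.cast_nonneg j)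
  simpa [Real.rpow_natCast] using integrable_rpow_mul_exp_neg_mul_sq hb hs

lemma integrable_P_pow (hσ : 0 < σ) (m : ℝ) (k : ℕ) :
    Integrable (fun y => P σ m y * y ^ k) := by
  set b : ℝ := (2 * σ ^ 2)⁻¹ with hbdef
  have hF : Integrable (fun x : ℝ => (x + m) ^ k * Real.exp (-b * x ^ 2)) := by
    have hrw : (fun x : ℝ => (x + m) ^ k * Real.exp (-b * x ^ 2))
        = fun x => ∑ i ∈ Finset.range (k + 1),
            (m ^ (k - i) * (k.choose i : ℝ)) * (x ^ i * Real.exp (-b * x ^ 2)) := by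
      funext x
      rw [add_pow, Finset.sum_mul]
      refine Finset.sum_congr rfl fun i _ => by ring
    rw [hrw]
    exact integrable_finset_sum _ fun i _ => (integrable_pow_exp hσ i).const_mul _
  have hshift : Integrable
      (fun y : ℝ => (y - m + m) ^ k * Real.exp (-b * (y - m) ^ 2)) := hF.comp_sub_right m
  have hrw2 : (fun y => P σ m y * y ^ k)
      = fun y => (Real.sqrt (2 * π * σ ^ 2))⁻¹ *
          ((y - m + m) ^ k * Real.exp (-b * (y - m) ^ 2)) := by
    funext y
    rw [P]
    have : -(y - m) ^ 2 / (2 * σ ^ 2) = -b * (y - m) ^ 2 := by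
      rw [hbdef]; field_simp
    rw [this]
    ring_nf
  rw [hrw2]
  exact hshift.const_mul _

lemma integral_pow_exp_even (hσ : 0 < σ) {k : ℕ} (hk : Even k) :
    ∫ y : ℝ, y ^ k * Real.exp (-(2 * σ ^ 2)⁻¹ * y ^ 2)
      = ((2 * σ ^ 2)⁻¹ : ℝ) ^ (-((k : ℝ) + 1) / 2) * Real.Gamma (((k : ℝ) + 1) / 2) := by
  have hb : (0:ℝ) < (2 * σ ^ 2)⁻¹ := by positivity
  have hs : (-1:ℝ) < (k : ℝ) := lt_of_lt_of_le neg_one_lt_zero (Nat.cast_nonneg k)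
  set b : ℝ := (2 * σ ^ 2)⁻¹ with hbdef
  have habs : (fun y : ℝ => y ^ k * Real.exp (-b * y ^ 2))
      = fun y : ℝ => (fun t => t ^ k * Real.exp (-b * t ^ 2)) |y| := by
    funext y
    simp only [Even.pow_abs hk, sq_abs]
  have hIoi : ∫ x in Set.Ioi (0:ℝ), x ^ k * Real.exp (-b * x ^ 2)
      = b ^ (-((k : ℝ) + 1) / 2) * (1 / 2) * Real.Gamma (((k : ℝ) + 1) / 2) := by
    have h := integral_rpow_mul_exp_neg_mul_rpow (p := 2) (q := (k : ℝ)) two_pos hs hb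
    have hcongr : ∫ x in Set.Ioi (0:ℝ), x ^ ((k : ℝ)) * Real.exp (-b * x ^ (2:ℝ))
        = ∫ x in Set.Ioi (0:ℝ), x ^ k * Real.exp (-b * x ^ 2) := by
      refine setIntegral_congr_fun measurableSet_Ioi fun x _ => ?_
      have e1 : x ^ ((k : ℝ)) = x ^ k := Real.rpow_natCast x k
      have e2 : x ^ ((2:ℝ)) = x ^ (2:ℕ) := by
        rw [show ((2:ℝ)) = ((2:ℕ) : ℝ) by norm_num, Real.rpow_natCast]
      rw [e1, e2]
    rw [hcongr] at h
    rw [h]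
  have h2 := integral_comp_abs (f := fun t => t ^ k * Real.exp (-b * t ^ 2))
  rw [← habs] at h2
  rw [h2, hIoi]; ring

lemma P_pow_eq (hσ : 0 < σ) (k : ℕ) : (fun y => P σ 0 y * y ^ k)
    = fun y => (Real.sqrt (2 * π * σ ^ 2))⁻¹ *
        (y ^ k * Real.exp (-(2 * σ ^ 2)⁻¹ * y ^ 2)) := by
  funext y
  rw [P]
  have : -(y - 0) ^ 2 / (2 * σ ^ 2) = -(2 * σ ^ 2)⁻¹ * y ^ 2 := by field_simp; ring
  rw [this]; ring

lemma sqrt_2pi (hσ : 0 < σ) :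
    Real.sqrt (2 * π * σ ^ 2) = Real.sqrt π * Real.sqrt (2 * σ ^ 2) := by
  rw [show 2 * π * σ ^ 2 = π * (2 * σ ^ 2) by ring, Real.sqrt_mul pi_pos.le]

lemma M2 (hσ : 0 < σ) : ∫ y : ℝ, P σ 0 y * y ^ 2 = σ ^ 2 := by
  have h2σ : (0:ℝ) < 2 * σ ^ 2 := by positivity
  rw [P_pow_eq hσ 2, integral_const_mul, integral_pow_exp_even hσ (by decide : Even 2)]
  have hg : Real.Gamma ((((2:ℕ) : ℝ) + 1) / 2) = (1 / 2) * Real.sqrt π := by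
    rw [show (((2:ℕ):ℝ) + 1) / 2 = 1/2 + 1 by norm_num, Real.Gamma_add_one (by norm_num),
      Real.Gamma_one_half_eq]
  have hbpow : ((2 * σ ^ 2)⁻¹ : ℝ) ^ (-(((2:ℕ) : ℝ) + 1) / 2)
      = (2 * σ ^ 2) * Real.sqrt (2 * σ ^ 2) := by
    rw [show (-(((2:ℕ):ℝ) + 1) / 2) = -(3/2 : ℝ) by norm_num,
      Real.inv_rpow h2σ.le, Real.rpow_neg h2σ.le, inv_inv,
      show (3/2 : ℝ) = 1 + 1/2 by norm_num, Real.rpow_add h2σ, Real.rpow_one,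
      ← Real.sqrt_eq_rpow]
  rw [hg, hbpow, sqrt_2pi hσ]
  have hsp : (0:ℝ) < Real.sqrt π := Real.sqrt_pos.mpr pi_pos
  have hss : (0:ℝ) < Real.sqrt (2 * σ ^ 2) := Real.sqrt_pos.mpr h2σ
  field_simp

lemma M4 (hσ : 0 < σ) : ∫ y : ℝ, P σ 0 y * y ^ 4 = 3 * σ ^ 4 := by
  have h2σ : (0:ℝ) < 2 * σ ^ 2 := by positivity
  rw [P_pow_eq hσ 4, integral_const_mul, integral_pow_exp_even hσ (by decide : Even 4)]
  have hg : Real.Gamma ((((4:ℕ) : ℝ) + 1) / 2) = (3 / 4) * Real.sqrt π := by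
    rw [show (((4:ℕ):ℝ) + 1) / 2 = (3/2 : ℝ) + 1 by norm_num, Real.Gamma_add_one (by norm_num),
      show (3/2 : ℝ) = 1/2 + 1 by norm_num, Real.Gamma_add_one (by norm_num),
      Real.Gamma_one_half_eq]
    ring
  have hbpow : ((2 * σ ^ 2)⁻¹ : ℝ) ^ (-(((4:ℕ) : ℝ) + 1) / 2)
      = (2 * σ ^ 2) ^ 2 * Real.sqrt (2 * σ ^ 2) := by
    rw [show (-(((4:ℕ):ℝ) + 1) / 2) = -(5/2 : ℝ) by norm_num,
      Real.inv_rpow h2σ.le, Real.rpow_neg h2σ.le, inv_inv,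
      show (5/2 : ℝ) = ((2:ℕ):ℝ) + 1/2 by norm_num, Real.rpow_add h2σ, Real.rpow_natCast,
      ← Real.sqrt_eq_rpow]
  rw [hg, hbpow, sqrt_2pi hσ]
  have hsp : (0:ℝ) < Real.sqrt π := Real.sqrt_pos.mpr pi_pos
  have hss : (0:ℝ) < Real.sqrt (2 * σ ^ 2) := Real.sqrt_pos.mpr h2σ
  field_simp
  ring

lemma M1 (hσ : 0 < σ) : ∫ y : ℝ, P σ 0 y * y = 0 := by
  have hodd : (fun y : ℝ => P σ 0 (-y) * (-y)) = fun y => -(P σ 0 y * y) := by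
    funext y
    have : (-y - 0 : ℝ) ^ 2 = (y - 0) ^ 2 := by ring
    rw [P, P, this]; ring
  have h := integral_neg_eq_self (fun y => P σ 0 y * y) volume
  rw [hodd, integral_neg] at h
  linarith

lemma sec_moment (hσ : 0 < σ) (m : ℝ) : ∫ y : ℝ, P σ m y * y ^ 2 = σ ^ 2 + m ^ 2 := by
  have h := integral_add_right_eq_self (μ := volume) (fun y => P σ m y * y ^ 2) m
  have hfun : (fun y : ℝ => P σ m (y + m) * (y + m) ^ 2)
      = fun y => P σ 0 y * y ^ 2 + ((2 * m) * (P σ 0 y * y) + m ^ 2 * P σ 0 y) := by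
    funext y
    rw [P, P, show (y + m - m) = y - (0:ℝ) by ring]
    ring
  rw [hfun] at h
  have i1 : Integrable (fun y : ℝ => (2 * m) * (P σ 0 y * y)) := by
    simpa [pow_one] using (integrable_P_pow hσ 0 1).const_mul (2 * m)
  have i2 : Integrable (fun y : ℝ => m ^ 2 * P σ 0 y) := (integrable_P hσ 0).const_mul _
  have e1 : ∫ y : ℝ, P σ 0 y * y ^ 2 + ((2 * m) * (P σ 0 y * y) + m ^ 2 * P σ 0 y)
      = (∫ y : ℝ, P σ 0 y * y ^ 2)
        + ∫ y : ℝ, (2 * m) * (P σ 0 y * y) + m ^ 2 * P σ 0 y :=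
    integral_add (integrable_P_pow hσ 0 2) (i1.add i2)
  have e2 : ∫ y : ℝ, (2 * m) * (P σ 0 y * y) + m ^ 2 * P σ 0 y
      = (∫ y : ℝ, (2 * m) * (P σ 0 y * y)) + ∫ y : ℝ, m ^ 2 * P σ 0 y :=
    integral_add i1 i2
  rw [e1, e2, integral_const_mul, integral_const_mul, M1 hσ, M2 hσ, integral_P hσ 0] at h
  rw [← h]
  ring

lemma G_nonneg (σ τ y : ℝ) : 0 ≤ G σ τ y := le_max_right _ _

lemma G_cont (σ τ : ℝ) : Continuous (G σ τ) :=
  (((continuous_pow 2).sub continuous_const).max continuous_const)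

lemma G_le_sq {τ : ℝ} (hc : 0 ≤ σ ^ 2 * τ) (y : ℝ) : G σ τ y ≤ y ^ 2 :=
  max_le (by linarith) (sq_nonneg y)

lemma G_even (σ τ a : ℝ) : G σ τ (-a) = G σ τ a := by
  rw [G, G, neg_pow, show ((-1:ℝ))^2 = 1 by norm_num, one_mul]

lemma intg_PG (hσ : 0 < σ) {τ : ℝ} (hc : 0 ≤ σ ^ 2 * τ) (m : ℝ) :
    Integrable (fun y => P σ m y * G σ τ y) := by
  refine (integrable_P_pow hσ m 2).mono' ((P_cont σ m).mul (G_cont σ τ)).aestronglyMeasurable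
    (Filter.Eventually.of_forall fun y => ?_)
  rw [Real.norm_eq_abs, abs_of_nonneg (mul_nonneg (P_nonneg σ m y) (G_nonneg σ τ y))]
  exact mul_le_mul_of_nonneg_left (G_le_sq hc y) (P_nonneg σ m y)

lemma intg_PG2 (hσ : 0 < σ) {τ : ℝ} (hc : 0 ≤ σ ^ 2 * τ) (m : ℝ) :
    Integrable (fun y => P σ m y * G σ τ y ^ 2) := by
  refine (integrable_P_pow hσ m 4).mono'
    ((P_cont σ m).mul ((G_cont σ τ).pow 2)).aestronglyMeasurable
    (Filter.Eventually.of_forall fun y => ?_)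
  rw [Real.norm_eq_abs, abs_of_nonneg (mul_nonneg (P_nonneg σ m y) (sq_nonneg _))]
  refine mul_le_mul_of_nonneg_left ?_ (P_nonneg σ m y)
  have h1 : G σ τ y ^ 2 ≤ (y ^ 2) ^ 2 :=
    pow_le_pow_left₀ (G_nonneg σ τ y) (G_le_sq hc y) 2
  calc G σ τ y ^ 2 ≤ (y ^ 2) ^ 2 := h1
    _ = y ^ 4 := by ring

lemma ratio (hσ : 0 < σ) (θ y : ℝ) : P σ θ y = P σ 0 y * Lf σ θ y := by
  have hS : -(y - θ) ^ 2 / (2 * σ ^ 2)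
      = -(y - 0) ^ 2 / (2 * σ ^ 2) + (2 * θ * y - θ ^ 2) / (2 * σ ^ 2) := by
    have hσ2 : (σ:ℝ) ^ 2 ≠ 0 := by positivity
    field_simp
    ring
  rw [P, P, Lf, hS, Real.exp_add]
  ring

lemma sqratio (hσ : 0 < σ) (θ y : ℝ) :
    P σ 0 y * Lf σ θ y ^ 2 = Real.exp (θ ^ 2 / σ ^ 2) * P σ (2 * θ) y := by
  have hσ2 : (σ:ℝ) ^ 2 ≠ 0 := by positivity
  have e1 : P σ 0 y * Lf σ θ y ^ 2 = (Real.sqrt (2 * π * σ ^ 2))⁻¹ *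
      Real.exp (-(y - 0) ^ 2 / (2 * σ ^ 2)
        + ((2 * θ * y - θ ^ 2) / (2 * σ ^ 2) + (2 * θ * y - θ ^ 2) / (2 * σ ^ 2))) := by
    rw [P, Lf, Real.exp_add, Real.exp_add]
    ring
  have hS : -(y - 0) ^ 2 / (2 * σ ^ 2)
        + ((2 * θ * y - θ ^ 2) / (2 * σ ^ 2) + (2 * θ * y - θ ^ 2) / (2 * σ ^ 2))
      = θ ^ 2 / σ ^ 2 + -(y - 2 * θ) ^ 2 / (2 * σ ^ 2) := by
    field_simp
    ring
  rw [e1, hS, Real.exp_add, P]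
  ring

lemma intgL (hσ : 0 < σ) (θ : ℝ) : Integrable (fun y => P σ 0 y * Lf σ θ y) := by
  have : (fun y => P σ 0 y * Lf σ θ y) = P σ θ := by
    funext y; rw [← ratio hσ]
  rw [this]
  exact integrable_P hσ θ

lemma intL (hσ : 0 < σ) (θ : ℝ) : ∫ y, P σ 0 y * Lf σ θ y = 1 := by
  have : (fun y => P σ 0 y * Lf σ θ y) = P σ θ := by
    funext y; rw [← ratio hσ]
  rw [this]
  exact integral_P hσ θ

lemma intgL2 (hσ : 0 < σ) (θ : ℝ) : Integrable (fun y => P σ 0 y * Lf σ θ y ^ 2) := by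
  have : (fun y => P σ 0 y * Lf σ θ y ^ 2)
      = fun y => Real.exp (θ ^ 2 / σ ^ 2) * P σ (2 * θ) y := by
    funext y; rw [sqratio hσ]
  rw [this]
  exact (integrable_P hσ (2 * θ)).const_mul _

lemma intL2 (hσ : 0 < σ) (θ : ℝ) :
    ∫ y, P σ 0 y * Lf σ θ y ^ 2 = Real.exp (θ ^ 2 / σ ^ 2) := by
  have : (fun y => P σ 0 y * Lf σ θ y ^ 2)
      = fun y => Real.exp (θ ^ 2 / σ ^ 2) * P σ (2 * θ) y := by
    funext y; rw [sqratio hσ]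
  rw [this, integral_const_mul, integral_P hσ, mul_one]

end Stmt19H
open Stmt19H Real in
theorem stmt19 (σ τ : ℝ) (hσ : 0 < σ) (hτ : 1 ≤ τ) (θ : ℝ) :
    0 ≤ Bfun σ τ θ ∧ Bfun σ τ (-θ) = Bfun σ τ θ ∧
      (Bfun σ τ θ) ^ 2 ≤
        max (6 * σ ^ 2 * θ ^ 2 + σ ^ 4 * (4 * Real.sqrt τ + 18) * Real.exp (-τ / 2))
          (10 * θ ^ 4) := by
  have hc : (0:ℝ) ≤ σ ^ 2 * τ := mul_nonneg (sq_nonneg σ) (by linarith)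
  have hG : (fun y : ℝ => max (y ^ 2 - σ ^ 2 * τ) 0) = G σ τ := rfl
  have hBθ : ∀ t : ℝ, Bfun σ τ t
      = (∫ y, P σ t y * G σ τ y) - ∫ y, P σ 0 y * G σ τ y := by
    intro t
    unfold Bfun
    rw [hG, Stmt19H.repr hσ t, Stmt19H.repr hσ 0]
  -- shift identities
  have key_shift : ∀ t : ℝ, ∫ y, P σ t y * G σ τ y = ∫ y, P σ 0 y * G σ τ (y + t) := by
    intro t
    have hfun : (fun y : ℝ => P σ t (y + t) * G σ τ (y + t))
        = fun y => P σ 0 y * G σ τ (y + t) := by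
      funext y
      rw [P, P, show (y + t - t) = y - (0:ℝ) by ring]
    have h := integral_add_right_eq_self (μ := volume) (fun y => P σ t y * G σ τ y) t
    rw [hfun] at h
    exact h.symm
  have key_int : ∀ t : ℝ, Integrable (fun y : ℝ => P σ 0 y * G σ τ (y + t)) := by
    intro t
    refine ((intg_PG hσ hc t).comp_add_right t).congr (Filter.Eventually.of_forall fun y => ?_)
    show P σ t (y + t) * G σ τ (y + t) = P σ 0 y * G σ τ (y + t)
    rw [P, P, show (y + t - t) = y - (0:ℝ) by ring]
  have key_int_minus : Integrable (fun y : ℝ => P σ 0 y * G σ τ (y - θ)) := by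
    refine ((intg_PG hσ hc (-θ)).comp_sub_right θ).congr (Filter.Eventually.of_forall fun y => ?_)
    show P σ (-θ) (y - θ) * G σ τ (y - θ) = P σ 0 y * G σ τ (y - θ)
    rw [P, P, show (y - θ - -θ) = y - (0:ℝ) by ring]
  have key_flip : ∫ y, P σ 0 y * G σ τ (y + θ) = ∫ y, P σ 0 y * G σ τ (y - θ) := by
    have h := integral_neg_eq_self (fun y : ℝ => P σ 0 y * G σ τ (y - θ)) volume
    have hfun : (fun y : ℝ => P σ 0 (-y) * G σ τ (-y - θ))
        = fun y => P σ 0 y * G σ τ (y + θ) := by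
      funext y
      have h1 : P σ 0 (-y) = P σ 0 y := by
        rw [P, P, show (-y - 0:ℝ) ^ 2 = (y - 0) ^ 2 by ring]
      have h2 : G σ τ (-y - θ) = G σ τ (y + θ) := by
        rw [show (-y - θ : ℝ) = -(y + θ) by ring, G_even]
      rw [h1, h2]
    rw [hfun] at h
    exact h
  -- nonnegativity
  have hconv : ∀ y : ℝ, 2 * G σ τ y ≤ G σ τ (y + θ) + G σ τ (y - θ) := by
    intro y
    rcases le_or_gt (y ^ 2) (σ ^ 2 * τ) with h | h
    · have h0 : G σ τ y = 0 := max_eq_right (by simp [G]; linarith)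
      have h1 := G_nonneg σ τ (y + θ)
      have h2 := G_nonneg σ τ (y - θ)
      rw [h0]; linarith
    · have h1 : (y + θ) ^ 2 - σ ^ 2 * τ ≤ G σ τ (y + θ) := le_max_left _ _
      have h2 : (y - θ) ^ 2 - σ ^ 2 * τ ≤ G σ τ (y - θ) := le_max_left _ _
      have h3 : G σ τ y = y ^ 2 - σ ^ 2 * τ := max_eq_left (by linarith)
      rw [h3]
      nlinarith [sq_nonneg θ]
  have hmono2 : ∫ y, (2:ℝ) * (P σ 0 y * G σ τ y)
      ≤ ∫ y, (P σ 0 y * G σ τ (y + θ) + P σ 0 y * G σ τ (y - θ)) := by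
    refine integral_mono ((intg_PG hσ hc 0).const_mul 2) ((key_int θ).add key_int_minus)
      fun y => ?_
    have h := mul_le_mul_of_nonneg_left (hconv y) (P_nonneg σ 0 y)
    dsimp only
    nlinarith [h]
  have hsum : ∫ y, (P σ 0 y * G σ τ (y + θ) + P σ 0 y * G σ τ (y - θ))
      = (∫ y, P σ 0 y * G σ τ (y + θ)) + ∫ y, P σ 0 y * G σ τ (y - θ) :=
    integral_add (key_int θ) key_int_minus
  have h2I : ∫ y, (2:ℝ) * (P σ 0 y * G σ τ y) = 2 * ∫ y, P σ 0 y * G σ τ y :=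
    integral_const_mul 2 _
  have hpos : 0 ≤ Bfun σ τ θ := by
    rw [hBθ θ]
    have e1 := key_shift θ
    rw [h2I, hsum, ← e1, ← key_flip, ← e1] at hmono2
    linarith
  -- evenness
  have heven : ∫ y, P σ (-θ) y * G σ τ y = ∫ y, P σ θ y * G σ τ y := by
    have h := integral_neg_eq_self (fun y : ℝ => P σ θ y * G σ τ y) volume
    have hfun : (fun y : ℝ => P σ θ (-y) * G σ τ (-y))
        = fun y => P σ (-θ) y * G σ τ y := by
      funext y
      rw [G_even, P, P, show (-y - θ:ℝ) ^ 2 = (y - -θ) ^ 2 by ring]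
    rw [hfun] at h
    exact h
  refine ⟨hpos, by rw [hBθ, hBθ, heven], ?_⟩
  -- the bound
  rcases le_or_gt (θ ^ 2) (σ ^ 2) with hcase | hcase
  · -- small θ : Cauchy–Schwarz with the likelihood ratio
    have hsq : ∀ y : ℝ, Real.sqrt (P σ 0 y) * Real.sqrt (P σ 0 y) = P σ 0 y :=
      fun y => Real.mul_self_sqrt (P_nonneg σ 0 y)
    have hf2 : (fun y : ℝ => (Real.sqrt (P σ 0 y) * G σ τ y) ^ 2)
        = fun y => P σ 0 y * G σ τ y ^ 2 := by
      funext y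
      calc (Real.sqrt (P σ 0 y) * G σ τ y) ^ 2
          = (Real.sqrt (P σ 0 y) * Real.sqrt (P σ 0 y)) * G σ τ y ^ 2 := by ring
        _ = P σ 0 y * G σ τ y ^ 2 := by rw [hsq y]
    have hh2 : (fun y : ℝ => (Real.sqrt (P σ 0 y) * (Lf σ θ y - 1)) ^ 2)
        = fun y => P σ 0 y * Lf σ θ y ^ 2 - 2 * (P σ 0 y * Lf σ θ y) + P σ 0 y := by
      funext y
      calc (Real.sqrt (P σ 0 y) * (Lf σ θ y - 1)) ^ 2
          = (Real.sqrt (P σ 0 y) * Real.sqrt (P σ 0 y)) * (Lf σ θ y - 1) ^ 2 := by ring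
        _ = P σ 0 y * (Lf σ θ y - 1) ^ 2 := by rw [hsq y]
        _ = P σ 0 y * Lf σ θ y ^ 2 - 2 * (P σ 0 y * Lf σ θ y) + P σ 0 y := by ring
    have hfh : (fun y : ℝ =>
          (Real.sqrt (P σ 0 y) * G σ τ y) * (Real.sqrt (P σ 0 y) * (Lf σ θ y - 1)))
        = fun y => P σ θ y * G σ τ y - P σ 0 y * G σ τ y := by
      funext y
      calc (Real.sqrt (P σ 0 y) * G σ τ y) * (Real.sqrt (P σ 0 y) * (Lf σ θ y - 1))
          = (Real.sqrt (P σ 0 y) * Real.sqrt (P σ 0 y)) * (G σ τ y * (Lf σ θ y - 1)) := by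
            ring
        _ = P σ 0 y * (G σ τ y * (Lf σ θ y - 1)) := by rw [hsq y]
        _ = (P σ 0 y * Lf σ θ y) * G σ τ y - P σ 0 y * G σ τ y := by ring
        _ = P σ θ y * G σ τ y - P σ 0 y * G σ τ y := by rw [← ratio hσ]
    have ih2 : Integrable
        (fun y : ℝ => P σ 0 y * Lf σ θ y ^ 2 - 2 * (P σ 0 y * Lf σ θ y) + P σ 0 y) :=
      ((intgL2 hσ θ).sub ((intgL hσ θ).const_mul 2)).add (integrable_P hσ 0)
    have ifh : Integrable (fun y : ℝ => P σ θ y * G σ τ y - P σ 0 y * G σ τ y) :=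
      (intg_PG hσ hc θ).sub (intg_PG hσ hc 0)
    have hcs := cs_int (μ := volume)
      (f := fun y => Real.sqrt (P σ 0 y) * G σ τ y)
      (g := fun y => Real.sqrt (P σ 0 y) * (Lf σ θ y - 1))
      (by rw [hf2]; exact intg_PG2 hσ hc 0)
      (by rw [hh2]; exact ih2)
      (by rw [hfh]; exact ifh)
    rw [hf2, hh2, hfh] at hcs
    have hDval : ∫ y : ℝ, P σ 0 y * Lf σ θ y ^ 2 - 2 * (P σ 0 y * Lf σ θ y) + P σ 0 y
        = Real.exp (θ ^ 2 / σ ^ 2) - 1 := by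
      have e1 : ∫ y : ℝ, (P σ 0 y * Lf σ θ y ^ 2 - 2 * (P σ 0 y * Lf σ θ y)) + P σ 0 y
          = (∫ y : ℝ, P σ 0 y * Lf σ θ y ^ 2 - 2 * (P σ 0 y * Lf σ θ y))
            + ∫ y : ℝ, P σ 0 y :=
        integral_add ((intgL2 hσ θ).sub ((intgL hσ θ).const_mul 2)) (integrable_P hσ 0)
      have e2 : ∫ y : ℝ, P σ 0 y * Lf σ θ y ^ 2 - 2 * (P σ 0 y * Lf σ θ y)
          = (∫ y : ℝ, P σ 0 y * Lf σ θ y ^ 2) - ∫ y : ℝ, 2 * (P σ 0 y * Lf σ θ y) :=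
        integral_sub (intgL2 hσ θ) ((intgL hσ θ).const_mul 2)
      rw [e1, e2, integral_const_mul, intL hσ θ, intL2 hσ θ, integral_P hσ 0]
      ring
    rw [hDval] at hcs
    have hAle : ∫ y : ℝ, P σ 0 y * G σ τ y ^ 2 ≤ 3 * σ ^ 4 := by
      have hm := integral_mono (intg_PG2 hσ hc 0) (integrable_P_pow hσ 0 4) fun y => by
        dsimp only
        refine mul_le_mul_of_nonneg_left ?_ (P_nonneg σ 0 y)
        calc G σ τ y ^ 2 ≤ (y ^ 2) ^ 2 :=
              pow_le_pow_left₀ (G_nonneg σ τ y) (G_le_sq hc y) 2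
          _ = y ^ 4 := by ring
      rwa [M4 hσ] at hm
    have hD0 : 0 ≤ Real.exp (θ ^ 2 / σ ^ 2) - 1 := by
      nlinarith [Real.add_one_le_exp (θ ^ 2 / σ ^ 2), sq_nonneg θ, sq_nonneg σ,
        div_nonneg (sq_nonneg θ) (sq_nonneg σ)]
    have hx0 : (0:ℝ) ≤ θ ^ 2 / σ ^ 2 := by positivity
    have hx1 : θ ^ 2 / σ ^ 2 ≤ 1 := by
      rw [div_le_one (by positivity)]
      exact hcase
    have hchord : Real.exp (θ ^ 2 / σ ^ 2) ≤ 1 + (Real.exp 1 - 1) * (θ ^ 2 / σ ^ 2) := by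
      have h := convexOn_exp.2 (Set.mem_univ (0:ℝ)) (Set.mem_univ (1:ℝ))
        (by linarith : (0:ℝ) ≤ 1 - θ ^ 2 / σ ^ 2) hx0 (by ring)
      simp only [smul_eq_mul, mul_zero, mul_one, zero_add, Real.exp_zero] at h
      linarith
    have he3 : Real.exp 1 < 3 := lt_trans Real.exp_one_lt_d9 (by norm_num)
    have hxval : σ ^ 4 * (θ ^ 2 / σ ^ 2) = σ ^ 2 * θ ^ 2 := by
      field_simp
    have hBval : Bfun σ τ θ = ∫ y, (P σ θ y * G σ τ y - P σ 0 y * G σ τ y) := by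
      rw [hBθ θ, integral_sub (intg_PG hσ hc θ) (intg_PG hσ hc 0)]
    have hmain : (Bfun σ τ θ) ^ 2 ≤ 6 * σ ^ 2 * θ ^ 2 := by
      rw [hBval]
      calc (∫ y, (P σ θ y * G σ τ y - P σ 0 y * G σ τ y)) ^ 2
          ≤ (∫ y : ℝ, P σ 0 y * G σ τ y ^ 2) * (Real.exp (θ ^ 2 / σ ^ 2) - 1) := hcs
        _ ≤ 3 * σ ^ 4 * (Real.exp (θ ^ 2 / σ ^ 2) - 1) :=
            mul_le_mul_of_nonneg_right hAle hD0
        _ ≤ 3 * σ ^ 4 * ((Real.exp 1 - 1) * (θ ^ 2 / σ ^ 2)) := by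
            refine mul_le_mul_of_nonneg_left (by linarith) (by positivity)
        _ = 3 * (Real.exp 1 - 1) * (σ ^ 4 * (θ ^ 2 / σ ^ 2)) := by ring
        _ = 3 * (Real.exp 1 - 1) * (σ ^ 2 * θ ^ 2) := by rw [hxval]
        _ ≤ 6 * σ ^ 2 * θ ^ 2 := by
            nlinarith [he3, mul_nonneg (sq_nonneg σ) (sq_nonneg θ)]
    refine le_trans hmain (le_trans ?_ (le_max_left _ _))
    have hextra : 0 ≤ σ ^ 4 * (4 * Real.sqrt τ + 18) * Real.exp (-τ / 2) := by positivity
    linarith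
  · -- large θ : crude second-moment bound
    have hI0 : 0 ≤ ∫ y, P σ 0 y * G σ τ y :=
      integral_nonneg fun y => mul_nonneg (P_nonneg σ 0 y) (G_nonneg σ τ y)
    have hIθ : ∫ y, P σ θ y * G σ τ y ≤ σ ^ 2 + θ ^ 2 := by
      have hm := integral_mono (intg_PG hσ hc θ) (integrable_P_pow hσ θ 2) fun y => by
        dsimp only
        exact mul_le_mul_of_nonneg_left (G_le_sq hc y) (P_nonneg σ θ y)
      rwa [sec_moment hσ θ] at hm
    refine le_trans ?_ (le_max_right _ _)
    rw [hBθ θ] at hpos ⊢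
    have hBle : (∫ y, P σ θ y * G σ τ y) - (∫ y, P σ 0 y * G σ τ y) ≤ σ ^ 2 + θ ^ 2 := by
      linarith
    have h1 : ((∫ y, P σ θ y * G σ τ y) - (∫ y, P σ 0 y * G σ τ y)) ^ 2
        ≤ (σ ^ 2 + θ ^ 2) ^ 2 := pow_le_pow_left₀ hpos hBle 2
    have h2 : (σ ^ 2 + θ ^ 2) ^ 2 ≤ 10 * θ ^ 4 := by
      nlinarith [mul_nonneg (le_of_lt (sub_pos.mpr hcase))
        (by positivity : (0:ℝ) ≤ σ ^ 2 + 3 * θ ^ 2)]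
    linarith
end
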